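/- Let additionally w : Ω → ℝ^d be ℋ-strongly measurable (w represents the exogenous shift ℓ(x_t) − x_t of the regressors). If the real random variables w ⬝ᵥ μvec, w ⬝ᵥ (Q ·ᵥ u̇), w ⬝ᵥ (Q ·ᵥ g), and w ⬝ᵥ (Q ·ᵥ ẏ) are integrable, then ∫ (w ⬝ᵥ μvec) dμ = ∫ w ⬝ᵥ (Q ·ᵥ ẏ − Q ·ᵥ g) dμ. (Identification of the average outcome change under an exogenous policy intervention.) -/

import Mathlib

open MeasureTheory Matrix

/-- A square real matrix of full rank is a unit. -/
lemma aux_isUnit_of_rank_eq {n : ℕ} {B : Matrix (Fin n) (Fin n) ℝ} (h : B.rank = n) :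
    IsUnit B := by
  rw [← Matrix.mulVec_surjective_iff_isUnit]
  have htop : LinearMap.range B.mulVecLin = ⊤ := by
    apply Submodule.eq_top_of_finrank_eq
    rw [show Module.finrank ℝ ↥(LinearMap.range B.mulVecLin) = B.rank from rfl, h,
      Module.finrank_fin_fun]
  intro y
  obtain ⟨x, hx⟩ := LinearMap.range_eq_top.mp htop y
  exact ⟨x, hx⟩

/-- The determinant of a matrix-valued map with measurable entries is measurable. -/
lemma aux_measurable_det {α : Type*} [MeasurableSpace α] {n : ℕ}
    {M : α → Matrix (Fin n) (Fin n) ℝ} (hM : ∀ i j, Measurable fun a => M a i j) :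
    Measurable fun a => (M a).det := by
  simp_rw [Matrix.det_apply']
  refine Finset.measurable_sum _ fun σ _ => Measurable.mul measurable_const ?_
  exact Finset.measurable_prod _ fun i _ => hM (σ i) i

/-- Entries of the adjugate of a matrix-valued map with measurable entries are measurable. -/
lemma aux_measurable_adjugate {α : Type*} [MeasurableSpace α] {n : ℕ}
    {M : α → Matrix (Fin n) (Fin n) ℝ} (hM : ∀ i j, Measurable fun a => M a i j)
    (i j : Fin n) : Measurable fun a => (M a).adjugate i j := by
  simp_rw [Matrix.adjugate_apply]
  refine aux_measurable_det fun p q => ?_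
  simp_rw [Matrix.updateRow_apply]
  by_cases hp : p = j
  · simp [hp]
  · simpa [hp] using hM p q

/-- Entries of the inverse of a matrix-valued map with measurable entries are measurable. -/
lemma aux_measurable_inv {α : Type*} [MeasurableSpace α] {n : ℕ}
    {M : α → Matrix (Fin n) (Fin n) ℝ} (hM : ∀ i j, Measurable fun a => M a i j)
    (i j : Fin n) : Measurable fun a => (M a)⁻¹ i j := by
  simp_rw [Matrix.inv_def, Matrix.smul_apply, Ring.inverse_eq_inv', smul_eq_mul]
  exact (measurable_inv.comp (aux_measurable_det hM)).mul (aux_measurable_adjugate hM i j)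

/-- If `f` is `ℋ`-strongly measurable, `u` is integrable with vanishing conditional
expectation and `f * u` is integrable, then `∫ f u = 0`. -/
lemma aux_integral_mul_zero {Ω : Type*} {ℋ : MeasurableSpace Ω} {mΩ : MeasurableSpace Ω}
    {μ : Measure Ω} [IsProbabilityMeasure μ] (hℋ : ℋ ≤ mΩ) {f u : Ω → ℝ}
    (hf : StronglyMeasurable[ℋ] f) (hu : Integrable u μ) (hce : μ[u | ℋ] =ᵐ[μ] 0)
    (hfu : Integrable (fun ω => f ω * u ω) μ) :
    ∫ ω, f ω * u ω ∂μ = 0 := by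
  haveI : SigmaFinite (μ.trim hℋ) := by infer_instance
  have hmul : μ[(fun ω => f ω * u ω) | ℋ] =ᵐ[μ] fun ω => f ω * (μ[u | ℋ]) ω :=
    condExp_mul_of_stronglyMeasurable_left hf hfu hu
  have hzero : μ[(fun ω => f ω * u ω) | ℋ] =ᵐ[μ] 0 := by
    filter_upwards [hmul, hce] with ω h1 h2
    simp [h1, h2]
  calc ∫ ω, f ω * u ω ∂μ = ∫ ω, (μ[(fun ω => f ω * u ω) | ℋ]) ω ∂μ :=
        (integral_condExp hℋ).symm
    _ = ∫ ω, (0 : Ω → ℝ) ω ∂μ := integral_congr_ae hzero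
    _ = 0 := by simp

/-- Orthogonality: `∫ h ⬝ᵥ u = 0` for `ℋ`-measurable `h` and `u` with `E[u|ℋ] = 0`. -/
lemma aux_integral_dot_zero {Ω : Type*} {ℋ : MeasurableSpace Ω} {mΩ : MeasurableSpace Ω}
    {μ : Measure Ω} [IsProbabilityMeasure μ] (hℋ : ℋ ≤ mΩ) {m : ℕ}
    {h u : Ω → Fin m → ℝ}
    (hh : ∀ j, StronglyMeasurable[ℋ] fun ω => h ω j)
    (hu : Integrable u μ)
    (hce : ∀ j, μ[(fun ω => u ω j) | ℋ] =ᵐ[μ] 0)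
    (hs : Integrable (fun ω => h ω ⬝ᵥ u ω) μ) :
    ∫ ω, h ω ⬝ᵥ u ω ∂μ = 0 := by
  set s : ℕ → Set Ω := fun n => {ω | ∀ j, |h ω j| ≤ n} with hs_def
  have hsmℋ : ∀ n, MeasurableSet[ℋ] (s n) := by
    intro n
    have : s n = ⋂ j, {ω | |h ω j| ≤ n} := by ext ω; simp [hs_def, Set.mem_iInter]
    rw [this]
    refine MeasurableSet.iInter fun j => ?_
    have : {ω | |h ω j| ≤ (n : ℝ)} = (fun ω => |h ω j|) ⁻¹' Set.Iic (n : ℝ) := rfl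
    rw [this]
    exact (measurable_abs.comp (hh j).measurable) measurableSet_Iic
  have hsm : ∀ n, MeasurableSet[mΩ] (s n) := fun n => hℋ _ (hsmℋ n)
  have hmono : Monotone s := by
    intro a b hab ω hω j
    exact (hω j).trans (by exact_mod_cast hab)
  have hunion : ⋃ n, s n = Set.univ := by
    ext ω
    simp only [Set.mem_iUnion, Set.mem_univ, iff_true]
    obtain ⟨n, hn⟩ := exists_nat_ge (∑ j, |h ω j|)
    exact ⟨n, fun j => le_trans (Finset.single_le_sum
      (fun k _ => abs_nonneg (h ω k)) (Finset.mem_univ j)) hn⟩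
  have hcomp : ∀ j : Fin m, Integrable (fun ω => u ω j) μ := fun j =>
    (ContinuousLinearMap.proj j : (Fin m → ℝ) →L[ℝ] ℝ).integrable_comp hu
  have key : ∀ n : ℕ, ∫ ω in s n, h ω ⬝ᵥ u ω ∂μ = 0 := by
    intro n
    rw [← integral_indicator (hsm n)]
    have heq : (Set.indicator (s n) fun ω => h ω ⬝ᵥ u ω)
        = fun ω => ∑ j, Set.indicator (s n) (fun ω => h ω j) ω * u ω j := by
      funext ω
      by_cases hω : ω ∈ s n
      · simp [Set.indicator_of_mem hω, dotProduct]
      · simp [Set.indicator_of_notMem hω]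
    rw [heq]
    have hterm_int : ∀ j : Fin m,
        Integrable (fun ω => Set.indicator (s n) (fun ω => h ω j) ω * u ω j) μ := by
      intro j
      refine (hcomp j).bdd_mul (c := n) ?_ (ae_of_all _ fun ω => ?_)
      · exact (((hh j).indicator (hsmℋ n)).mono hℋ).aestronglyMeasurable
      · by_cases hω : ω ∈ s n
        · simpa [Set.indicator_of_mem hω, Real.norm_eq_abs] using hω j
        · rw [Set.indicator_of_notMem hω]
          simp
    rw [integral_finset_sum _ fun j _ => hterm_int j]
    refine Finset.sum_eq_zero fun j _ => ?_
    exact aux_integral_mul_zero hℋ ((hh j).indicator (hsmℋ n)) (hcomp j) (hce j)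
      (hterm_int j)
  have hlim := tendsto_setIntegral_of_monotone hsm hmono
    (by rw [hunion]; exact hs.integrableOn)
  rw [hunion, Measure.restrict_univ] at hlim
  have h0 : (fun n => ∫ ω in s n, h ω ⬝ᵥ u ω ∂μ) = fun _ => (0 : ℝ) := funext key
  rw [h0] at hlim
  exact tendsto_nhds_unique hlim tendsto_const_nhds

/-- Identification of the average outcome change under an exogenous policy intervention. -/
theorem average_policy_effect_identification
    {Ω : Type*} {mΩ : MeasurableSpace Ω} (μ : Measure Ω) [IsProbabilityMeasure μ]
    (ℋ : MeasurableSpace Ω) (hℋ : ℋ ≤ mΩ)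
    (m d : ℕ) (hd : 0 < d) (hdm : d < m)
    (Xdot : Ω → Matrix (Fin m) (Fin d) ℝ)
    (hXmeas : ∀ i j, StronglyMeasurable[ℋ] fun ω => Xdot ω i j)
    (hXrank : ∀ᵐ ω ∂μ, (Xdot ω).rank = d)
    (Q : Ω → Matrix (Fin d) (Fin m) ℝ)
    (hQ : ∀ ω, Q ω = ((Xdot ω)ᵀ * Xdot ω)⁻¹ * (Xdot ω)ᵀ)
    (μvec : Ω → Fin d → ℝ) (hμvec : Integrable μvec μ)
    (g : Ω → Fin m → ℝ)
    (udot : Ω → Fin m → ℝ) (hu_int : Integrable udot μ)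
    (hu_ce : ∀ i, μ[(fun ω => udot ω i) | ℋ] =ᵐ[μ] 0)
    (ydot : Ω → Fin m → ℝ)
    (hy : ∀ ω, ydot ω = Xdot ω *ᵥ μvec ω + g ω + udot ω)
    (w : Ω → Fin d → ℝ)
    (hwmeas : ∀ i, StronglyMeasurable[ℋ] fun ω => w ω i)
    (hwμ : Integrable (fun ω => w ω ⬝ᵥ μvec ω) μ)
    (hwQu : Integrable (fun ω => w ω ⬝ᵥ (Q ω *ᵥ udot ω)) μ)
    (hwQg : Integrable (fun ω => w ω ⬝ᵥ (Q ω *ᵥ g ω)) μ)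
    (hwQy : Integrable (fun ω => w ω ⬝ᵥ (Q ω *ᵥ ydot ω)) μ) :
    ∫ ω, (w ω ⬝ᵥ μvec ω) ∂μ
      = ∫ ω, w ω ⬝ᵥ (Q ω *ᵥ ydot ω - Q ω *ᵥ g ω) ∂μ := by
  -- measurability of the entries of Q (with respect to ℋ)
  have hBmeas : ∀ i j : Fin d,
      Measurable[ℋ] fun ω => ((Xdot ω)ᵀ * Xdot ω) i j := by
    intro i j
    have : (fun ω => ((Xdot ω)ᵀ * Xdot ω) i j)
        = fun ω => ∑ k, Xdot ω k i * Xdot ω k j := by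
      funext ω; simp [Matrix.mul_apply, Matrix.transpose_apply]
    rw [this]
    exact Finset.measurable_sum _ fun k _ =>
      (hXmeas k i).measurable.mul (hXmeas k j).measurable
  have hQmeas : ∀ i j, StronglyMeasurable[ℋ] fun ω => Q ω i j := by
    intro i j
    have heq : (fun ω => Q ω i j)
        = fun ω => ∑ k, ((Xdot ω)ᵀ * Xdot ω)⁻¹ i k * Xdot ω j k := by
      funext ω
      rw [hQ ω]
      simp [Matrix.mul_apply, Matrix.transpose_apply]
    rw [heq]
    refine Measurable.stronglyMeasurable <| Finset.measurable_sum _ fun k _ => ?_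
    exact (aux_measurable_inv (M := fun ω => (Xdot ω)ᵀ * Xdot ω) hBmeas i k).mul
      (hXmeas j k).measurable
  -- the ℋ-measurable row vector h = w ᵥ* Q
  set h : Ω → Fin m → ℝ := fun ω => w ω ᵥ* Q ω with hh_def
  have hhmeas : ∀ j, StronglyMeasurable[ℋ] fun ω => h ω j := by
    intro j
    have : (fun ω => h ω j) = fun ω => ∑ i, w ω i * Q ω i j := by
      funext ω; simp [hh_def, Matrix.vecMul, dotProduct]
    rw [this]
    exact Measurable.stronglyMeasurable <| Finset.measurable_sum _ fun i _ =>
      ((hwmeas i).measurable.mul (hQmeas i j).measurable)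
  -- orthogonality
  have hdot_eq : (fun ω => w ω ⬝ᵥ (Q ω *ᵥ udot ω)) = fun ω => h ω ⬝ᵥ udot ω := by
    funext ω; rw [hh_def, Matrix.dotProduct_mulVec]
  have hzero : ∫ ω, w ω ⬝ᵥ (Q ω *ᵥ udot ω) ∂μ = 0 := by
    rw [hdot_eq]
    exact aux_integral_dot_zero hℋ hhmeas hu_int hu_ce (hdot_eq ▸ hwQu)
  -- a.e. algebraic identity
  have hae : ∀ᵐ ω ∂μ, w ω ⬝ᵥ (Q ω *ᵥ ydot ω - Q ω *ᵥ g ω)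
      = w ω ⬝ᵥ μvec ω + w ω ⬝ᵥ (Q ω *ᵥ udot ω) := by
    filter_upwards [hXrank] with ω hr
    have hB : IsUnit ((Xdot ω)ᵀ * Xdot ω).det := by
      have hrk : ((Xdot ω)ᵀ * Xdot ω).rank = d := by
        rw [Matrix.rank_transpose_mul_self, hr]
      exact (Matrix.isUnit_iff_isUnit_det _).mp (aux_isUnit_of_rank_eq hrk)
    have hQX : Q ω * Xdot ω = 1 := by
      rw [hQ ω, Matrix.mul_assoc, Matrix.nonsing_inv_mul _ hB]
    have hv : Q ω *ᵥ ydot ω - Q ω *ᵥ g ω = μvec ω + Q ω *ᵥ udot ω := by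
      rw [hy ω, Matrix.mulVec_add, Matrix.mulVec_add, Matrix.mulVec_mulVec, hQX,
        Matrix.one_mulVec]
      abel
    rw [hv, dotProduct_add]
  calc ∫ ω, w ω ⬝ᵥ μvec ω ∂μ
      = ∫ ω, w ω ⬝ᵥ μvec ω ∂μ + ∫ ω, w ω ⬝ᵥ (Q ω *ᵥ udot ω) ∂μ := by rw [hzero, add_zero]
    _ = ∫ ω, (w ω ⬝ᵥ μvec ω + w ω ⬝ᵥ (Q ω *ᵥ udot ω)) ∂μ := (integral_add hwμ hwQu).symm
    _ = ∫ ω, w ω ⬝ᵥ (Q ω *ᵥ ydot ω - Q ω *ᵥ g ω) ∂μ := (integral_congr_ae hae).symm
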